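/- For every integer k ≥ 1, the Fibonacci digraph F(2,k) is isomorphic to its converse via sequence reversal: the map x_1x_2…x_k ↦ x_kx_{k−1}…x_1 is a bijection of the vertex set of F(2,k) onto itself such that there is an arc from x to y in F(2,k) if and only if there is an arc from the reversal of y to the reversal of x. -/
import Mathlib


/-- A vertex of the d-Fibonacci digraph F(d,k): a sequence x : Fin k → ZMod d
such that whenever a digit is nonzero, the next digit is its successor mod d. -/
def fibIsVertex (d k : ℕ) (x : Fin k → ZMod d) : Prop :=
  ∀ (i : ℕ) (h : i + 1 < k),
    x ⟨i, Nat.lt_of_succ_lt h⟩ ≠ 0 →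
      x ⟨i + 1, h⟩ = x ⟨i, Nat.lt_of_succ_lt h⟩ + 1

/-- The arc relation of F(d,k): y is the left shift of x, and if the last digit
of x is nonzero then the last digit of y is its successor mod d. -/
def fibArc (d k : ℕ) (x y : Fin k → ZMod d) : Prop :=
  (∀ (i : ℕ) (h : i + 1 < k), y ⟨i, Nat.lt_of_succ_lt h⟩ = x ⟨i + 1, h⟩) ∧
  (∀ h : 0 < k, x ⟨k - 1, Nat.sub_lt h Nat.one_pos⟩ ≠ 0 →
    y ⟨k - 1, Nat.sub_lt h Nat.one_pos⟩ = x ⟨k - 1, Nat.sub_lt h Nat.one_pos⟩ + 1)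

lemma fib_xeq {k : ℕ} (x : Fin k → ZMod 2) {a b : ℕ} (ha : a < k) (hb : b < k)
    (h : a = b) : x ⟨a, ha⟩ = x ⟨b, hb⟩ := by subst h; rfl

lemma fib_two01 : ∀ a : ZMod 2, a = 0 ∨ a = 1 := by decide

/-- In ZMod 2 the vertex condition says: a 1 is always followed by a 0. -/
lemma fib_adj {k : ℕ} (x : Fin k → ZMod 2) : fibIsVertex 2 k x ↔
    ∀ (i : ℕ) (h : i + 1 < k), x ⟨i, Nat.lt_of_succ_lt h⟩ = 1 → x ⟨i + 1, h⟩ = 0 := by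
  constructor
  · intro hv i h h1
    have := hv i h (by rw [h1]; decide)
    rw [this, h1]; decide
  · intro hv i h h0
    have h1 : x ⟨i, Nat.lt_of_succ_lt h⟩ = 1 := (fib_two01 _).resolve_left h0
    rw [hv i h h1, h1]; decide

/-- F(2,k) is isomorphic to its converse via sequence reversal. -/
theorem fib_self_converse (k : ℕ) (hk : 1 ≤ k) :
    Set.BijOn
      (fun (x : Fin k → ZMod 2) => fun i : Fin k => x ⟨k - 1 - i.1, by omega⟩)
      {x | fibIsVertex 2 k x} {x | fibIsVertex 2 k x} ∧
    ∀ x y : Fin k → ZMod 2, fibIsVertex 2 k x → fibIsVertex 2 k y →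
      (fibArc 2 k x y ↔
        fibArc 2 k (fun i : Fin k => y ⟨k - 1 - i.1, by omega⟩)
          (fun i : Fin k => x ⟨k - 1 - i.1, by omega⟩)) := by
  have inv : ∀ (x : Fin k → ZMod 2) (i : Fin k),
      x ⟨k - 1 - (k - 1 - i.1), by omega⟩ = x i := by
    intro x i
    exact fib_xeq x (by omega) i.2 (by omega)
  have mapsto : ∀ x : Fin k → ZMod 2, fibIsVertex 2 k x →
      fibIsVertex 2 k (fun i : Fin k => x ⟨k - 1 - i.1, by omega⟩) := by
    intro x hx
    rw [fib_adj] at hx ⊢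
    intro i h h1
    show x ⟨k - 1 - (i + 1), by omega⟩ = 0
    have h1' : x ⟨k - 1 - i, by omega⟩ = 1 := h1
    by_contra h0
    have h2 : x ⟨k - 1 - (i + 1), by omega⟩ = 1 := (fib_two01 _).resolve_left h0
    have h3 := hx (k - 1 - (i + 1)) (by omega) h2
    rw [fib_xeq x (by omega) (by omega) (show k - 1 - (i + 1) + 1 = k - 1 - i by omega),
      h1'] at h3
    exact one_ne_zero h3
  constructor
  · refine ⟨fun x hx => mapsto x hx, ?_, ?_⟩
    · intro a _ b _ h
      funext i
      have := congrFun h ⟨k - 1 - i.1, by omega⟩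
      simpa [inv] using this
    · intro y hy
      refine ⟨fun i : Fin k => y ⟨k - 1 - i.1, by omega⟩, mapsto y hy, ?_⟩
      funext i
      exact inv y i
  · intro x y hx hy
    constructor
    · rintro ⟨harc, hlast⟩
      constructor
      · intro i h
        show x ⟨k - 1 - i, by omega⟩ = y ⟨k - 1 - (i + 1), by omega⟩
        have h1 := harc (k - 1 - (i + 1)) (by omega)
        rw [fib_xeq x (by omega) (by omega)
          (show k - 1 - (i + 1) + 1 = k - 1 - i by omega)] at h1
        exact h1.symm
      · intro hpos h0
        show x ⟨k - 1 - (k - 1), by omega⟩ = y ⟨k - 1 - (k - 1), by omega⟩ + 1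
        have h0' : y ⟨k - 1 - (k - 1), by omega⟩ ≠ 0 := h0
        have hy0 : y ⟨k - 1 - (k - 1), by omega⟩ = 1 := (fib_two01 _).resolve_left h0'
        have hx0 : x ⟨k - 1 - (k - 1), by omega⟩ = 0 := by
          by_cases hk2 : 2 ≤ k
          · have h1 := harc 0 (by omega)
            rw [fib_xeq y (by omega) (by omega) (show 0 = k - 1 - (k - 1) by omega),
              hy0] at h1
            -- h1 : 1 = x ⟨1, _⟩
            by_contra hc
            have hx1 : x ⟨0, by omega⟩ = 1 := by
              have := (fib_two01 (x ⟨k - 1 - (k - 1), by omega⟩)).resolve_left hc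
              rwa [fib_xeq x (by omega) (by omega) (show k - 1 - (k-1) = 0 by omega)] at this
            have := (fib_adj x).mp hx 0 (by omega) hx1
            rw [← h1] at this
            exact one_ne_zero this
          · have hk1 : k = 1 := by omega
            by_contra hc
            have hx1 : x ⟨k - 1, by omega⟩ = 1 := by
              have := (fib_two01 _).resolve_left hc
              rwa [fib_xeq x (by omega) (by omega) (show k - 1 - (k-1) = k - 1 by omega)] at this
            have h2 := hlast hpos (by rw [hx1]; decide)
            rw [hx1] at h2
            have hy1 : y ⟨k - 1, by omega⟩ = 1 := by
              rwa [fib_xeq y (by omega) (by omega) (show k - 1 - (k-1) = k - 1 by omega)] at hy0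
            rw [hy1, show (1:ZMod 2) + 1 = 0 by decide] at h2
            exact one_ne_zero h2
        rw [hx0, hy0]; decide
    · rintro ⟨harc', hlast'⟩
      have harc : ∀ (i : ℕ) (h : i + 1 < k), y ⟨i, Nat.lt_of_succ_lt h⟩ = x ⟨i + 1, h⟩ := by
        intro i h
        have h1 : x ⟨k - 1 - (k - 1 - (i + 1)), by omega⟩
            = y ⟨k - 1 - (k - 1 - (i + 1) + 1), by omega⟩ := harc' (k - 1 - (i + 1)) (by omega)
        rw [fib_xeq x (by omega) h (show k - 1 - (k - 1 - (i+1)) = i + 1 by omega),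
          fib_xeq y (by omega) (Nat.lt_of_succ_lt h)
            (show k - 1 - (k - 1 - (i+1) + 1) = i by omega)] at h1
        exact h1.symm
      refine ⟨harc, ?_⟩
      intro hpos h0
      have hx1 : x ⟨k - 1, Nat.sub_lt hpos Nat.one_pos⟩ = 1 := (fib_two01 _).resolve_left h0
      rw [hx1]
      have goal0 : y ⟨k - 1, Nat.sub_lt hpos Nat.one_pos⟩ = 0 := by
        by_cases hk2 : 2 ≤ k
        · have h1 := harc (k - 2) (by omega)
          rw [fib_xeq x (by omega) (by omega) (show k - 2 + 1 = k - 1 by omega), hx1] at h1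
          have hy1 : y ⟨k - 2, by omega⟩ = 1 := h1
          have := (fib_adj y).mp hy (k - 2) (by omega) hy1
          rwa [fib_xeq y (by omega) (by omega) (show k - 2 + 1 = k - 1 by omega)] at this
        · have hk1 : k = 1 := by omega
          by_contra hc
          have hy1 : y ⟨k - 1, Nat.sub_lt hpos Nat.one_pos⟩ = 1 := (fib_two01 _).resolve_left hc
          have hy1' : y ⟨k - 1 - (k - 1), by omega⟩ ≠ 0 := by
            rw [fib_xeq y (by omega) (by omega) (show k - 1 - (k-1) = k - 1 by omega), hy1]
            decide
          have h2 := hlast' hpos hy1'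
          have h2' : x ⟨k - 1 - (k - 1), by omega⟩ = y ⟨k - 1 - (k - 1), by omega⟩ + 1 := h2
          rw [fib_xeq x (by omega) (by omega) (show k - 1 - (k-1) = k - 1 by omega),
            fib_xeq y (by omega) (by omega) (show k - 1 - (k-1) = k - 1 by omega),
            hx1, hy1, show (1:ZMod 2) + 1 = 0 by decide] at h2'
          exact one_ne_zero h2'
      rw [goal0]; decide
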